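/- For the Lie algebra L(3,6) = su(2) with brackets [f_1, f_2] = f_3, [f_2, f_3] = f_1, [f_3, f_1] = f_2, and orthonormal basis e_1 = αf_1, e_2 = βf_1 + εf_2, e_3 = γf_1 + ζf_2 + ιf_3 (α, ε, ι ≠ 0), the generalised Killing endomorphism matrix A computed via the structure-constant formula is symmetric for every choice of parameters with αει ≠ 0. -/
import Mathlib


/-- The bracket of `su(2)` in the basis `(f_1,f_2,f_3)`: `[f_1,f_2] = f_3`, `[f_2,f_3] = f_1`, `[f_3,f_1] = f_2`. -/
def su2bracket (u v : Fin 3 → ℝ) : Fin 3 → ℝ :=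
  ![u 1 * v 2 - u 2 * v 1, u 2 * v 0 - u 0 * v 2, u 0 * v 1 - u 1 * v 0]

/-- The generalised Killing endomorphism matrix built from structure constants. -/
noncomputable def gkMatrix (c12_1 c12_2 c12_3 c13_1 c13_2 c13_3 c23_1 c23_2 c23_3 : ℝ) :
    Matrix (Fin 3) (Fin 3) ℝ :=
  !![(1/4) * (c12_3 - c13_2 - c23_1), -(1/2) * c23_2, -(1/2) * c23_3;
     (1/2) * c13_1, (1/4) * (c12_3 + c13_2 + c23_1), (1/2) * c13_3;
     -(1/2) * c12_1, -(1/2) * c12_2, (1/4) * (-c12_3 - c13_2 + c23_1)]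

set_option maxHeartbeats 1000000 in
theorem su2_gk_symm (α β γ ε ζ ι : ℝ)
    (hα : α ≠ 0) (hε : ε ≠ 0) (hι : ι ≠ 0)
    (e : Fin 3 → Fin 3 → ℝ)
    (he : e = ![![α, 0, 0], ![β, ε, 0], ![γ, ζ, ι]])
    (c : Fin 3 → Fin 3 → Fin 3 → ℝ)
    (hc : ∀ i j, su2bracket (e i) (e j) = ∑ k, c i j k • e k) :
    (gkMatrix (c 0 1 0) (c 0 1 1) (c 0 1 2) (c 0 2 0) (c 0 2 1) (c 0 2 2)
        (c 1 2 0) (c 1 2 1) (c 1 2 2)).IsSymm := by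
  subst he
  have h01 := hc 0 1
  have h02 := hc 0 2
  have h12 := hc 1 2
  have e010 := congrFun h01 0
  have e011 := congrFun h01 1
  have e012 := congrFun h01 2
  have e020 := congrFun h02 0
  have e021 := congrFun h02 1
  have e022 := congrFun h02 2
  have e120 := congrFun h12 0
  have e121 := congrFun h12 1
  have e122 := congrFun h12 2
  simp [su2bracket, Fin.sum_univ_three] at e010 e011 e012 e020 e021 e022 e120 e121 e122
  have k012 : c 0 1 2 = α*ε/ι := by linear_combination (norm := (field_simp; try ring)) (-1/ι) * e012
  have k011 : c 0 1 1 = -(α*ζ/ι) := by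
    linear_combination (norm := (field_simp; try ring)) (-1/ε) * e011 - (ζ/ε) * k012
  have k010 : c 0 1 0 = (β*ζ - ε*γ)/ι := by
    linear_combination (norm := (field_simp; try ring)) (-1/α) * e010 - (β/α) * k011 - (γ/α) * k012
  have k022 : c 0 2 2 = α*ζ/ι := by linear_combination (norm := (field_simp; try ring)) (-1/ι) * e022
  have k021 : c 0 2 1 = (-(α*ι*ι) - α*ζ*ζ)/(ε*ι) := by
    linear_combination (norm := (field_simp; try ring)) (-1/ε) * e021 - (ζ/ε) * k022
  have k020 : c 0 2 0 = -((-(α*ι*ι) - α*ζ*ζ)*β/(ε*ι) + α*ζ*γ/ι)/α := by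
    linear_combination (norm := (field_simp; try ring)) (-1/α) * e020 - (β/α) * k021 - (γ/α) * k022
  have k122 : c 1 2 2 = (β*ζ - ε*γ)/ι := by linear_combination (norm := (field_simp; try ring)) (-1/ι) * e122
  have k121 : c 1 2 1 = (-(β*ι*ι) - (β*ζ - ε*γ)*ζ)/(ε*ι) := by
    linear_combination (norm := (field_simp; try ring)) (-1/ε) * e121 - (ζ/ε) * k122
  have g1 : c 0 2 0 = -c 1 2 1 := by rw [k020, k121]; field_simp; ring
  have g2 : c 0 1 0 = c 1 2 2 := by rw [k010, k122]
  have g3 : c 0 2 2 = -c 0 1 1 := by rw [k022, k011]; ring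
  rw [Matrix.IsSymm]
  ext i j
  fin_cases i <;> fin_cases j <;>
    simp [gkMatrix, Matrix.transpose_apply] <;> linarith [g1, g2, g3]
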